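/- Let b : ℕ → ℝ be nonnegative, let θ : ℕ → ℝ, and for l ≤ r set S(l, r) = ∑_{j=l}^{r−1} b(j). For l < r with S(l, r) > 0 define the unit vector ψ(l, r) = (1/√(S(l,r))) · ∑_{j=l}^{r−1} exp(i(θ(j) − θ(l))/2)·√(b(j))·e_j (a complex-valued finitely supported function on ℕ). Then for all u < w < v with S(u, w) > 0 and S(w, v) > 0: ψ(u, v) = √(S(u,w)/S(u,v))·ψ(u, w) + exp(i(θ(w) − θ(u))/2)·√(S(w,v)/S(u,v))·ψ(w, v). This is the amplitude decomposition that justifies one recursive step of the quantum state preparation circuit, with γ = S(u,w)/S(u,v) and β = θ(w) − θ(u). -/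

import Mathlib

open scoped BigOperators

/-- `Ssum b l r = ∑_{j=l}^{r-1} b j`. -/
noncomputable def Ssum (b : ℕ → ℝ) (l r : ℕ) : ℝ := ∑ j ∈ Finset.Ico l r, b j

/-- The (finitely supported) state
`ψ(l,r) = (1/√(S(l,r))) · ∑_{j=l}^{r−1} exp(i(θ j − θ l)/2)·√(b j)·e_j`. -/
noncomputable def qspState (b θ : ℕ → ℝ) (l r : ℕ) : ℕ →₀ ℂ :=
  (1 / (Real.sqrt (Ssum b l r) : ℂ)) •
    ∑ j ∈ Finset.Ico l r,
      (Complex.exp (Complex.I * ((θ j : ℂ) - (θ l : ℂ)) / 2) * (Real.sqrt (b j) : ℂ)) •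
        Finsupp.single j (1 : ℂ)

/-- the amplitude decomposition justifying one recursive step of quantum
state preparation: for `u < w < v` with `S(u,w) > 0` and `S(w,v) > 0`,
`ψ(u,v) = √(S(u,w)/S(u,v))·ψ(u,w) + exp(i(θ w − θ u)/2)·√(S(w,v)/S(u,v))·ψ(w,v)`. -/
theorem qspState_decomposition (b θ : ℕ → ℝ) (hb : ∀ j, 0 ≤ b j)
    (u w v : ℕ) (huw : u < w) (hwv : w < v)
    (hS1 : 0 < Ssum b u w) (hS2 : 0 < Ssum b w v) :
    qspState b θ u v =
      (Real.sqrt (Ssum b u w / Ssum b u v) : ℂ) • qspState b θ u w +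
        (Complex.exp (Complex.I * ((θ w : ℂ) - (θ u : ℂ)) / 2) *
          (Real.sqrt (Ssum b w v / Ssum b u v) : ℂ)) • qspState b θ w v := by
  have hle1 := huw.le
  have hle2 := hwv.le
  have hSv : Ssum b u v = Ssum b u w + Ssum b w v := by
    simp [Ssum, ← Finset.sum_Ico_consecutive _ hle1 hle2]
  have hSpos : 0 < Ssum b u v := by rw [hSv]; positivity
  have h1 : Real.sqrt (Ssum b u w) ≠ 0 := by positivity
  have h2 : Real.sqrt (Ssum b w v) ≠ 0 := by positivity
  have h3 : Real.sqrt (Ssum b u v) ≠ 0 := by positivity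
  have h1' : (Real.sqrt (Ssum b u w) : ℂ) ≠ 0 := by exact_mod_cast h1
  have h2' : (Real.sqrt (Ssum b w v) : ℂ) ≠ 0 := by exact_mod_cast h2
  have h3' : (Real.sqrt (Ssum b u v) : ℂ) ≠ 0 := by exact_mod_cast h3
  unfold qspState
  have hB : (∑ j ∈ Finset.Ico w v,
      (Complex.exp (Complex.I * ((θ j : ℂ) - (θ u : ℂ)) / 2) * (Real.sqrt (b j) : ℂ)) •
        Finsupp.single j (1 : ℂ))
      = Complex.exp (Complex.I * ((θ w : ℂ) - (θ u : ℂ)) / 2) •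
        ∑ j ∈ Finset.Ico w v,
          (Complex.exp (Complex.I * ((θ j : ℂ) - (θ w : ℂ)) / 2) * (Real.sqrt (b j) : ℂ)) •
            Finsupp.single j (1 : ℂ) := by
    rw [Finset.smul_sum]
    refine Finset.sum_congr rfl fun j hj => ?_
    rw [smul_smul, ← mul_assoc, ← Complex.exp_add]
    congr 2
    ring
  rw [← Finset.sum_Ico_consecutive _ hle1 hle2, smul_add, smul_smul, smul_smul, hB, smul_smul]
  congr 2
  · rw [Real.sqrt_div hS1.le, Complex.ofReal_div]
    field_simp
  · rw [Real.sqrt_div hS2.le, Complex.ofReal_div]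
    field_simp
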